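/- Let X and Y be real Hilbert spaces, let L : X → Y be a continuous ℝ-linear map with adjoint L* : Y → X, let U ⊆ X and V ⊆ Y be closed linear subspaces, and let σ > 0 and τ > 0. Define T : X × Y → X × Y by T(x,y) := ( P_U(x − σ L* y), P_{V^⊥}( y + τ L( 2 P_U(x − σ L* y) − x ) ) ). Then T(x,y) = (x,y) if and only if x ∈ U, L x ∈ V, y ∈ V^⊥, and L* y ∈ U^⊥; that is, the fixed point set of T equals (U ∩ L⁻¹(V)) × (V^⊥ ∩ (L*)⁻¹(U^⊥)). -/

import Mathlib

open scoped RealInnerProductSpace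

lemma proj_eq_iff' {X : Type*} [NormedAddCommGroup X] [InnerProductSpace ℝ X]
    (U : Submodule ℝ X) [U.HasOrthogonalProjection] (v w : X) :
    (Submodule.orthogonalProjectionOnto U v : X) = w ↔ w ∈ U ∧ v - w ∈ Uᗮ := by
  constructor
  · rintro rfl
    exact ⟨(Submodule.orthogonalProjectionOnto U v).2, Submodule.sub_starProjection_mem_orthogonal v⟩
  · rintro ⟨hw, ho⟩
    exact Submodule.eq_starProjection_of_mem_of_inner_eq_zero hw fun u hu =>
      (Submodule.mem_orthogonal' _ _).1 ho u hu

/-- The fixed point set of the Chambolle–Pock operator for the normal cones of closed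
subspaces `U ⊆ X`, `V ⊆ Y` equals `(U ∩ L⁻¹(V)) × (Vᗮ ∩ (L*)⁻¹(Uᗮ))`. -/
theorem stmt_14
    {X Y : Type*} [NormedAddCommGroup X] [InnerProductSpace ℝ X] [CompleteSpace X]
    [NormedAddCommGroup Y] [InnerProductSpace ℝ Y] [CompleteSpace Y]
    (L : X →L[ℝ] Y) (U : Submodule ℝ X) (V : Submodule ℝ Y)
    [U.HasOrthogonalProjection] [V.HasOrthogonalProjection]
    (σ τ : ℝ) (hσ : 0 < σ) (hτ : 0 < τ)
    (x : X) (y : Y) :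
    ((Submodule.orthogonalProjectionOnto U (x - σ • ContinuousLinearMap.adjoint L y) : X) = x ∧
        (Submodule.orthogonalProjectionOnto Vᗮ
          (y + τ • L ((2 : ℝ) •
            (Submodule.orthogonalProjectionOnto U (x - σ • ContinuousLinearMap.adjoint L y) : X) - x)) : Y)
          = y) ↔
      (x ∈ U ∧ L x ∈ V ∧ y ∈ Vᗮ ∧ ContinuousLinearMap.adjoint L y ∈ Uᗮ) := by
  have hσ' : σ ≠ 0 := hσ.ne'
  have hτ' : τ ≠ 0 := hτ.ne'
  constructor
  · rintro ⟨h1, h2⟩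
    obtain ⟨hxU, ho⟩ := (proj_eq_iff' U _ x).1 h1
    have hLy : ContinuousLinearMap.adjoint L y ∈ Uᗮ := by
      have hrw : x - σ • ContinuousLinearMap.adjoint L y - x
          = σ • (-(ContinuousLinearMap.adjoint L y)) := by module
      rw [hrw] at ho
      have := Uᗮ.smul_mem σ⁻¹ ho
      rw [smul_smul, inv_mul_cancel₀ hσ', one_smul] at this
      simpa using Uᗮ.neg_mem this
    rw [h1] at h2
    have hx2 : (2 : ℝ) • x - x = x := by module
    rw [hx2] at h2
    obtain ⟨hyV, ho2⟩ := (proj_eq_iff' Vᗮ _ y).1 h2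
    have hLx : L x ∈ V := by
      have hrw : y + τ • L x - y = τ • L x := by module
      rw [hrw] at ho2
      have := Vᗮᗮ.smul_mem τ⁻¹ ho2
      rw [smul_smul, inv_mul_cancel₀ hτ', one_smul, V.orthogonal_orthogonal] at this
      exact this
    exact ⟨hxU, hLx, hyV, hLy⟩
  · rintro ⟨hxU, hLx, hyV, hLy⟩
    have h1 : (Submodule.orthogonalProjectionOnto U (x - σ • ContinuousLinearMap.adjoint L y) : X) = x := by
      rw [proj_eq_iff']
      refine ⟨hxU, ?_⟩
      have hrw : x - σ • ContinuousLinearMap.adjoint L y - x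
          = σ • (-(ContinuousLinearMap.adjoint L y)) := by module
      rw [hrw]
      exact Uᗮ.smul_mem σ (Uᗮ.neg_mem hLy)
    refine ⟨h1, ?_⟩
    rw [h1]
    have hx2 : (2 : ℝ) • x - x = x := by module
    rw [hx2, proj_eq_iff']
    refine ⟨hyV, ?_⟩
    have hrw : y + τ • L x - y = τ • L x := by module
    rw [hrw]
    exact Vᗮᗮ.smul_mem τ (by rwa [V.orthogonal_orthogonal])
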